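/- Let ω : [t₀,t₁]² → [0,∞) be continuous on [t₀,t₀+ε]² for some ε > 0 with ω(t₀,t₀) ≠ 0, and let a₁,…,a_n : [t₀,t₁] → [0,∞) be right-continuous at t₀ with ∑_{k=1}^n a_k(t₀) > 0. Then for each j, the quotient (∫_{t₀}^t ω(s,t)a_j(s) ds) / (∑_{k=1}^n ∫_{t₀}^t ω(s,t)a_k(s) ds) converges to a_j(t₀)/∑_{k=1}^n a_k(t₀) as t → t₀⁺. -/

import Mathlib

open MeasureTheory intervalIntegral Set Filter

private lemma div_div_div_same (A B c : ℝ) (hc : c ≠ 0) : A / c / (B / c) = A / B := by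
  rcases eq_or_ne B 0 with hB | hB
  · simp [hB]
  · field_simp

private lemma key_aux (t₀ t₁ : ℝ) (ht : t₀ < t₁)
    (ω : ℝ → ℝ → ℝ) (b : ℝ → ℝ)
    (hωnn : ∀ s t, 0 ≤ ω s t) (hbnn : ∀ s, 0 ≤ b s)
    (ε : ℝ) (hε : 0 < ε)
    (hωcont : ContinuousOn (fun p : ℝ × ℝ => ω p.1 p.2)
      (Icc t₀ (t₀ + ε) ×ˢ Icc t₀ (t₀ + ε)))
    (hbcont : Tendsto b (nhdsWithin t₀ (Ici t₀)) (nhds (b t₀)))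
    (hint : ∀ t ∈ Icc t₀ t₁,
      IntervalIntegrable (fun s => ω s t * b s) volume t₀ t) :
    Tendsto (fun t => (∫ s in t₀..t, ω s t * b s) / (t - t₀))
      (nhdsWithin t₀ (Ioi t₀)) (nhds (ω t₀ t₀ * b t₀)) := by
  set ω₀ := ω t₀ t₀ with hω₀
  set a₀ := b t₀ with ha₀
  rw [Metric.tendsto_nhds]
  intro ε' hε'
  set C : ℝ := ω₀ + 1 + a₀ with hC
  have hCpos : 0 < C := by
    have := hωnn t₀ t₀; have := hbnn t₀; positivity
  set η : ℝ := min 1 (ε' / (2 * C)) with hη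
  have hηpos : 0 < η := lt_min one_pos (by positivity)
  have hη1 : η ≤ 1 := min_le_left _ _
  have hη2 : η ≤ ε' / (2 * C) := min_le_right _ _
  -- continuity of ω at (t₀, t₀) within the square
  have hmem : (t₀, t₀) ∈ Icc t₀ (t₀ + ε) ×ˢ Icc t₀ (t₀ + ε) := by
    constructor <;> exact ⟨le_refl _, by linarith⟩
  have hωc : ContinuousWithinAt (fun p : ℝ × ℝ => ω p.1 p.2)
      (Icc t₀ (t₀ + ε) ×ˢ Icc t₀ (t₀ + ε)) (t₀, t₀) := hωcont _ hmem
  rw [Metric.continuousWithinAt_iff] at hωc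
  obtain ⟨δ₁, hδ₁pos, hδ₁⟩ := hωc η hηpos
  rw [Metric.tendsto_nhdsWithin_nhds] at hbcont
  obtain ⟨δ₂, hδ₂pos, hδ₂⟩ := hbcont η hηpos
  set δ : ℝ := min (min δ₁ δ₂) (min ε (t₁ - t₀)) with hδ
  have hδpos : 0 < δ := by
    refine lt_min (lt_min hδ₁pos hδ₂pos) (lt_min hε (by linarith))
  filter_upwards [Ioo_mem_nhdsGT_of_mem (show t₀ ∈ Ico t₀ (t₀ + δ) from ⟨le_refl _, by linarith⟩)]
    with t htmem
  obtain ⟨ht₀t, htδ⟩ := htmem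
  have htt₁ : t ≤ t₁ := by
    have : δ ≤ t₁ - t₀ := le_trans (min_le_right _ _) (min_le_right _ _)
    linarith
  have hintt : IntervalIntegrable (fun s => ω s t * b s) volume t₀ t :=
    hint t ⟨le_of_lt ht₀t, htt₁⟩
  have hsub : t - t₀ > 0 := by linarith
  -- pointwise bound on Ioc t₀ t
  have hbound : ∀ s ∈ Set.uIoc t₀ t, ‖ω s t * b s - ω₀ * a₀‖ ≤ C * η := by
    intro s hs
    rw [Set.uIoc_of_le (le_of_lt ht₀t)] at hs
    obtain ⟨hs1, hs2⟩ := hs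
    have hstδ : t - t₀ < δ := by linarith
    have hsδ : s - t₀ < δ := by linarith
    have hδε : δ ≤ ε := le_trans (min_le_right _ _) (min_le_left _ _)
    have hδ1' : δ ≤ δ₁ := le_trans (min_le_left _ _) (min_le_left _ _)
    have hδ2' : δ ≤ δ₂ := le_trans (min_le_left _ _) (min_le_right _ _)
    have hsmem : (s, t) ∈ Icc t₀ (t₀ + ε) ×ˢ Icc t₀ (t₀ + ε) := by
      constructor
      · exact ⟨le_of_lt hs1, by linarith⟩
      · exact ⟨le_of_lt ht₀t, by linarith⟩
    have hdist : dist (s, t) (t₀, t₀) < δ₁ := by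
      rw [Prod.dist_eq]
      apply max_lt
      · rw [Real.dist_eq, abs_of_nonneg (by linarith)]; linarith
      · rw [Real.dist_eq, abs_of_nonneg (by linarith)]; linarith
    have hω_close : |ω s t - ω₀| < η := by
      have := hδ₁ hsmem hdist
      rwa [Real.dist_eq] at this
    have hb_close : |b s - a₀| < η := by
      have : dist s t₀ < δ₂ := by
        rw [Real.dist_eq, abs_of_nonneg (by linarith)]; linarith
      have := hδ₂ (le_of_lt hs1) this
      rwa [Real.dist_eq] at this
    have habs : |ω s t * b s - ω₀ * a₀| ≤ |ω s t| * |b s - a₀| + |ω s t - ω₀| * |a₀| := by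
      calc |ω s t * b s - ω₀ * a₀|
          = |ω s t * (b s - a₀) + (ω s t - ω₀) * a₀| := by ring_nf
        _ ≤ |ω s t * (b s - a₀)| + |(ω s t - ω₀) * a₀| := abs_add_le _ _
        _ = |ω s t| * |b s - a₀| + |ω s t - ω₀| * |a₀| := by rw [abs_mul, abs_mul]
    have hωb : |ω s t| ≤ ω₀ + 1 := by
      rw [abs_of_nonneg (hωnn s t)]
      have := abs_lt.mp hω_close
      linarith
    have ha₀b : |a₀| = a₀ := abs_of_nonneg (hbnn t₀)
    rw [Real.norm_eq_abs]
    calc |ω s t * b s - ω₀ * a₀| ≤ |ω s t| * |b s - a₀| + |ω s t - ω₀| * |a₀| := habs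
      _ ≤ (ω₀ + 1) * η + η * a₀ := by
          apply add_le_add
          · exact mul_le_mul hωb (le_of_lt hb_close) (abs_nonneg _) (by have := hωnn t₀ t₀; linarith)
          · rw [ha₀b]; exact mul_le_mul_of_nonneg_right (le_of_lt hω_close) (hbnn t₀)
      _ = C * η := by rw [hC]; ring
  -- the constant function is integrable
  have hconst : IntervalIntegrable (fun _ : ℝ => ω₀ * a₀) volume t₀ t :=
    intervalIntegrable_const
  have hdiff := hintt.sub hconst
  have hnorm : ‖∫ s in t₀..t, (ω s t * b s - ω₀ * a₀)‖ ≤ C * η * |t - t₀| :=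
    intervalIntegral.norm_integral_le_of_norm_le_const hbound
  have hsplit : (∫ s in t₀..t, (ω s t * b s - ω₀ * a₀))
      = (∫ s in t₀..t, ω s t * b s) - (t - t₀) * (ω₀ * a₀) := by
    rw [intervalIntegral.integral_sub hintt hconst, intervalIntegral.integral_const, smul_eq_mul]
  rw [Real.dist_eq]
  have habs_t : |t - t₀| = t - t₀ := abs_of_pos hsub
  have key : |(∫ s in t₀..t, ω s t * b s) - (t - t₀) * (ω₀ * a₀)| ≤ C * η * (t - t₀) := by
    rw [← hsplit, ← habs_t]
    simpa [Real.norm_eq_abs] using hnorm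
  have : |(∫ s in t₀..t, ω s t * b s) / (t - t₀) - ω₀ * a₀| ≤ C * η := by
    rw [show (∫ s in t₀..t, ω s t * b s) / (t - t₀) - ω₀ * a₀
        = ((∫ s in t₀..t, ω s t * b s) - (t - t₀) * (ω₀ * a₀)) / (t - t₀) by
          field_simp]
    rw [abs_div, habs_t, div_le_iff₀ hsub]
    calc |(∫ s in t₀..t, ω s t * b s) - (t - t₀) * (ω₀ * a₀)|
        ≤ C * η * (t - t₀) := key
      _ = C * η * (t - t₀) := rfl
  calc |(∫ s in t₀..t, ω s t * b s) / (t - t₀) - ω₀ * a₀| ≤ C * η := this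
    _ ≤ C * (ε' / (2 * C)) := mul_le_mul_of_nonneg_left hη2 (le_of_lt hCpos)
    _ = ε' / 2 := by field_simp
    _ < ε' := by linarith

theorem stmt_12 (n : ℕ) (t₀ t₁ : ℝ) (ht : t₀ < t₁)
    (ω : ℝ → ℝ → ℝ) (a : Fin n → ℝ → ℝ)
    (hωnn : ∀ s t, 0 ≤ ω s t) (hann : ∀ k s, 0 ≤ a k s)
    (ε : ℝ) (hε : 0 < ε)
    (hωcont : ContinuousOn (fun p : ℝ × ℝ => ω p.1 p.2)
      (Icc t₀ (t₀ + ε) ×ˢ Icc t₀ (t₀ + ε)))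
    (hω0 : ω t₀ t₀ ≠ 0)
    (hacont : ∀ k, Tendsto (a k) (nhdsWithin t₀ (Ici t₀)) (nhds (a k t₀)))
    (hint : ∀ k, ∀ t ∈ Icc t₀ t₁,
      IntervalIntegrable (fun s => ω s t * a k s) volume t₀ t)
    (hsum : 0 < ∑ k, a k t₀) :
    ∀ j, Tendsto
      (fun t => (∫ s in t₀..t, ω s t * a j s) /
        ∑ k, ∫ s in t₀..t, ω s t * a k s)
      (nhdsWithin t₀ (Ioi t₀))
      (nhds (a j t₀ / ∑ k, a k t₀)) := by
  intro j
  have hF : ∀ k : Fin n, Tendsto (fun t => (∫ s in t₀..t, ω s t * a k s) / (t - t₀))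
      (nhdsWithin t₀ (Ioi t₀)) (nhds (ω t₀ t₀ * a k t₀)) := fun k =>
    key_aux t₀ t₁ ht ω (a k) hωnn (hann k) ε hε hωcont (hacont k) (hint k)
  have hFsum : Tendsto (fun t => ∑ k, (∫ s in t₀..t, ω s t * a k s) / (t - t₀))
      (nhdsWithin t₀ (Ioi t₀)) (nhds (ω t₀ t₀ * ∑ k, a k t₀)) := by
    rw [Finset.mul_sum]
    exact tendsto_finset_sum _ (fun k _ => hF k)
  have hden : ω t₀ t₀ * ∑ k, a k t₀ ≠ 0 :=
    mul_ne_zero hω0 (ne_of_gt hsum)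
  have hdiv := (hF j).div hFsum hden
  have hlim : ω t₀ t₀ * a j t₀ / (ω t₀ t₀ * ∑ k, a k t₀) = a j t₀ / ∑ k, a k t₀ :=
    mul_div_mul_left _ _ hω0
  rw [hlim] at hdiv
  refine hdiv.congr' ?_
  filter_upwards [self_mem_nhdsWithin] with t htmem
  have htne : t - t₀ ≠ 0 := sub_ne_zero.mpr (ne_of_gt htmem)
  simp only [Pi.div_apply]
  rw [← Finset.sum_div]
  exact div_div_div_same _ _ _ htne
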